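/- For each k ≥ 1, the virtual knot L_{2k} given by the Gauss diagram consisting of one positive chord transversally intersected by 2k−1 parallel positive chords has odd writhe polynomial f_{L_{2k}}(t) = t^{2k} + 2k − 1, and consequently f_{L*_{2k}}(t) = t^{−2k+2} + (2k−1)t². -/

import Mathlib

open Finset LaurentPolynomial

/-- A signed, oriented chord diagram (combinatorial Gauss diagram) with `n` chords:
the `2*n` chord endpoints on the circle are the elements of `Fin (2*n)` in (positive)
cyclic order; chord `i` has over endpoint `c⁺ = ep (i, true)`, under endpoint
`c⁻ = ep (i, false)` and a sign (writhe) `sign i ∈ {1, -1}`. -/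
structure ChordDiagram (n : ℕ) where
  ep : Fin n × Bool ≃ Fin (2 * n)
  sign : Fin n → ℤ
  sign_unit : ∀ i, sign i = 1 ∨ sign i = -1

namespace ChordDiagram

variable {n : ℕ}

/-- the over endpoint `c⁺` of a chord -/
def over' (D : ChordDiagram n) (i : Fin n) : Fin (2 * n) := D.ep (i, true)

/-- the under endpoint `c⁻` of a chord -/
def under (D : ChordDiagram n) (i : Fin n) : Fin (2 * n) := D.ep (i, false)

/-- the number of steps from `b` to `x`, travelling in the positive direction
around the circle -/
def relpos (b x : Fin (2 * n)) : ℕ := (x.val + 2 * n - b.val) % (2 * n)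

/-- `x` lies strictly between the endpoints of chord `i`, on the side swept out
going from `c⁺` to `c⁻` in the positive direction -/
def StrictlyBetween (D : ChordDiagram n) (i : Fin n) (x : Fin (2 * n)) : Prop :=
  0 < relpos (D.over' i) x ∧ relpos (D.over' i) x < relpos (D.over' i) (D.under i)

instance (D : ChordDiagram n) (i : Fin n) (x : Fin (2 * n)) :
    Decidable (D.StrictlyBetween i x) := inferInstanceAs (Decidable (_ ∧ _))

/-- two distinct chords interlink if their endpoints alternate around the circle,
i.e. exactly one endpoint of `j` lies strictly between the endpoints of `i` -/
def Interlinks (D : ChordDiagram n) (i j : Fin n) : Prop :=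
  i ≠ j ∧ Xor (D.StrictlyBetween i (D.over' j)) (D.StrictlyBetween i (D.under j))

instance (D : ChordDiagram n) (i j : Fin n) : Decidable (D.Interlinks i j) :=
  inferInstanceAs (Decidable (_ ∧ _))

/-- the number of chords interlinking chord `i` -/
def interlinkCount (D : ChordDiagram n) (i : Fin n) : ℕ :=
  (univ.filter fun j => D.Interlinks i j).card

/-- the number of chord endpoints lying (strictly) on one side of chord `i` -/
def sideCount (D : ChordDiagram n) (i : Fin n) : ℕ :=
  (univ.filter fun x => D.StrictlyBetween i x).card

/-- a chord is odd if it interlinks an odd number of other chords -/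
def OddChord (D : ChordDiagram n) (i : Fin n) : Prop := Odd (D.interlinkCount i)

instance (D : ChordDiagram n) (i : Fin n) : Decidable (D.OddChord i) :=
  inferInstanceAs (Decidable (Odd _))

/-- The label `N(a)` of the arc whose terminal point is `a`: the sum of the signs of
all chords whose over endpoint is met strictly before their under endpoint when
traversing the circle once in the positive direction starting inside this arc. -/
def arcLabel (D : ChordDiagram n) (a : Fin (2 * n)) : ℤ :=
  ∑ i ∈ univ.filter fun i => relpos a (D.over' i) < relpos a (D.under i), D.sign i

/-- The value `N(c)` of a chord: for a positive chord, the difference `x - y` of the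
arc labels just before `c⁺` and just before `c⁻`; for a negative chord, the difference
`z - w` of the arc labels just after `c⁺` and just after `c⁻` (the label just after an
over endpoint is the label just before it minus the sign, and the label just after an
under endpoint is the label just before it plus the sign). -/
def chordVal (D : ChordDiagram n) (i : Fin n) : ℤ :=
  if D.sign i = 1 then D.arcLabel (D.over' i) - D.arcLabel (D.under i)
  else (D.arcLabel (D.over' i) - D.sign i) - (D.arcLabel (D.under i) + D.sign i)

/-- the odd writhe `J(K) = Σ_{c odd} w(c)` -/
def oddWrithe (D : ChordDiagram n) : ℤ :=
  ∑ i ∈ univ.filter fun i => D.OddChord i, D.sign i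

/-- the odd writhe polynomial `f_K(t) = Σ_{c odd} w(c) · t^{N(c)} ∈ ℤ[t,t⁻¹]` -/
noncomputable def owp (D : ChordDiagram n) : LaurentPolynomial ℤ :=
  ∑ i ∈ univ.filter fun i => D.OddChord i, C (D.sign i) * T (D.chordVal i)

/-- evaluation of the odd writhe polynomial at a rational number `x`:
`Σ_{c odd} w(c) · x^{N(c)}` -/
def owpEval (D : ChordDiagram n) (x : ℚ) : ℚ :=
  ∑ i ∈ univ.filter fun i => D.OddChord i, (D.sign i : ℚ) * x ^ D.chordVal i

/-- the coefficient of `t^k` in a Laurent polynomial -/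
def coeffOf (f : LaurentPolynomial ℤ) (k : ℤ) : ℤ := f.coeff k

/-- the degree `Deg f = max { |i| : coefficient of tⁱ in f is nonzero }` -/
def owpDeg (f : LaurentPolynomial ℤ) : ℕ := f.coeff.support.sup fun k => k.natAbs

/-- reversing the orientation of the knot: the cyclic order of the endpoints is
reversed, while signs and over/under data of the crossings are preserved -/
def reverse (D : ChordDiagram n) : ChordDiagram n where
  ep := D.ep.trans Fin.revPerm
  sign := D.sign
  sign_unit := D.sign_unit

/-- the mirror image: every crossing is switched, so every chord's over and under
endpoints are exchanged and its sign is negated -/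
def mirror (D : ChordDiagram n) : ChordDiagram n where
  ep := (Equiv.prodCongr (Equiv.refl (Fin n))
      ⟨fun b => !b, fun b => !b, Bool.not_not, Bool.not_not⟩).trans D.ep
  sign := fun i => -D.sign i
  sign_unit := fun i => (D.sign_unit i).elim
    (fun h => Or.inr (show -D.sign i = -1 by rw [h]))
    (fun h => Or.inl (show -D.sign i = 1 by rw [h]; ring))

/-! ### Planarity via the Euler characteristic of the carrier surface

The diagram determines a 4-valent graph (vertices = chords, edges = the `2*n` arcs of
the circle) together with a rotation system at each vertex, coming from the structure
of a transversal crossing: for a positive crossing the counterclockwise order of the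
four ends is (over-out, under-out, over-in, under-in), for a negative crossing it is
(over-out, under-in, over-in, under-out).  The diagram is realizable by a classical
(planar) knot diagram iff the resulting closed oriented carrier surface is a sphere,
i.e. iff `V - E + F = n - 2n + F = 2`.

Darts are encoded as pairs `(p, io) : Fin (2*n) × Bool`, meaning the end of an arc
at the vertex through the circle point `p`, with `io = true` for the outgoing arc
(from `p` to `p+1`) and `io = false` for the incoming arc (from `p-1` to `p`). -/

/-- the other endpoint of the chord through a given endpoint -/
def otherEnd (D : ChordDiagram n) (p : Fin (2 * n)) : Fin (2 * n) :=
  D.ep ((D.ep.symm p).1, !(D.ep.symm p).2)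

lemma otherEnd_otherEnd (D : ChordDiagram n) (p : Fin (2 * n)) :
    D.otherEnd (D.otherEnd p) = p := by
  simp [otherEnd]

/-- whether the rotation at the vertex toggles the in/out marker when passing from
the end at `p` to the end at the other endpoint of its chord -/
def tog (D : ChordDiagram n) (p : Fin (2 * n)) : Bool :=
  if D.sign (D.ep.symm p).1 = 1 then !(D.ep.symm p).2 else (D.ep.symm p).2

/-- the vertex rotation permutation on darts -/
def vertexPerm (D : ChordDiagram n) : Equiv.Perm (Fin (2 * n) × Bool) :=
  Equiv.trans
    ⟨fun x => (x.1, xor x.2 (D.tog x.1)), fun x => (x.1, xor x.2 (D.tog x.1)),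
      fun x => by simp [Bool.xor_assoc], fun x => by simp [Bool.xor_assoc]⟩
    ⟨fun x => (D.otherEnd x.1, x.2), fun x => (D.otherEnd x.1, x.2),
      fun x => by simp [otherEnd_otherEnd], fun x => by simp [otherEnd_otherEnd]⟩

/-- the edge involution on darts, matching the two ends of each arc -/
def arcPerm (D : ChordDiagram n) : Equiv.Perm (Fin (2 * n) × Bool) :=
  ⟨fun x => if x.2 then (finRotate (2 * n) x.1, false) else ((finRotate (2 * n)).symm x.1, true),
   fun x => if x.2 then (finRotate (2 * n) x.1, false) else ((finRotate (2 * n)).symm x.1, true),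
   fun x => by rcases x with ⟨p, _ | _⟩ <;> simp only [ite_true, ite_false, Bool.false_eq_true, Equiv.apply_symm_apply, Equiv.symm_apply_apply],
   fun x => by rcases x with ⟨p, _ | _⟩ <;> simp only [ite_true, ite_false, Bool.false_eq_true, Equiv.apply_symm_apply, Equiv.symm_apply_apply]⟩

/-- the face permutation on darts -/
def facePerm (D : ChordDiagram n) : Equiv.Perm (Fin (2 * n) × Bool) :=
  (D.arcPerm).trans D.vertexPerm

/-- the number of faces: the number of orbits of the face permutation -/
noncomputable def faceCount (D : ChordDiagram n) : ℕ :=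
  Nat.card (MulAction.orbitRel.Quotient (Subgroup.zpowers D.facePerm) (Fin (2 * n) × Bool))

/-- the chord diagram arises from a classical (planar) knot diagram: the carrier
surface has Euler characteristic `V - E + F = n - 2n + faceCount = 2` -/
def PlanarRealizable (D : ChordDiagram n) : Prop := D.faceCount = n + 2

end ChordDiagram


open ChordDiagram

/-- the Gauss diagram of the virtual knot `L_{2k}` of Figure 16: the vertical chord
`0` runs from point `0` (over) to point `2k` (under), and the `2k-1` parallel
horizontal chords `i` run from point `i` (over) to point `4k - i` (under). -/
def Lpos (k : ℕ) : Fin (2 * k) × Bool → Fin (2 * (2 * k)) := fun p =>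
  if p.2 then ⟨p.1.val, by have := p.1.isLt; omega⟩
  else if h : p.1.val = 0 then ⟨2 * k, by have := p.1.isLt; omega⟩
  else ⟨4 * k - p.1.val, by have := p.1.isLt; omega⟩

namespace Stmt15Aux

lemma relpos_eq {m : ℕ} (b x : Fin (2 * m)) :
    ChordDiagram.relpos b x =
      if b.val ≤ x.val then x.val - b.val else x.val + 2 * m - b.val := by
  have hb := b.isLt; have hx := x.isLt
  unfold ChordDiagram.relpos
  split_ifs with h
  · have he : x.val + 2 * m - b.val = (x.val - b.val) + 2 * m := by omega
    rw [he, Nat.add_mod_right, Nat.mod_eq_of_lt (by omega)]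
  · rw [Nat.mod_eq_of_lt (by omega)]

lemma card_filter_val {n : ℕ} {q : Fin n → Prop} [DecidablePred q]
    (p : ℕ → Prop) [DecidablePred p] (hpq : ∀ j : Fin n, q j ↔ p j.val) :
    ((Finset.univ : Finset (Fin n)).filter q).card
      = ((Finset.range n).filter p).card := by
  rw [Finset.filter_congr (fun j _ => hpq j), Finset.card_filter, Finset.card_filter,
    ← Fin.sum_univ_eq_sum_range]

lemma card_filter_Ico {n a b : ℕ} (p : ℕ → Prop) [DecidablePred p] (hb : b ≤ n)
    (h : ∀ x, x < n → (p x ↔ a ≤ x ∧ x < b)) :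
    ((Finset.range n).filter p).card = b - a := by
  have he : (Finset.range n).filter p = Finset.Ico a b := by
    ext x
    simp only [Finset.mem_filter, Finset.mem_range, Finset.mem_Ico]
    constructor
    · rintro ⟨h1, h2⟩; exact (h x h1).1 h2
    · rintro ⟨h1, h2⟩
      exact ⟨lt_of_lt_of_le h2 hb, (h x (lt_of_lt_of_le h2 hb)).2 ⟨h1, h2⟩⟩
  rw [he, Nat.card_Ico]

lemma card_filter_zero_or {n a b : ℕ} (p : ℕ → Prop) [DecidablePred p]
    (hn : 0 < n) (ha : 0 < a) (hb : b ≤ n)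
    (h : ∀ x, x < n → (p x ↔ (x = 0 ∨ (a ≤ x ∧ x < b)))) :
    ((Finset.range n).filter p).card = b - a + 1 := by
  have he : (Finset.range n).filter p = insert 0 (Finset.Ico a b) := by
    ext x
    simp only [Finset.mem_filter, Finset.mem_range, Finset.mem_insert, Finset.mem_Ico]
    constructor
    · rintro ⟨h1, h2⟩; exact (h x h1).1 h2
    · rintro (rfl | ⟨h1, h2⟩)
      · exact ⟨hn, (h 0 hn).2 (Or.inl rfl)⟩
      · exact ⟨lt_of_lt_of_le h2 hb, (h x (lt_of_lt_of_le h2 hb)).2 (Or.inr ⟨h1, h2⟩)⟩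
  rw [he, Finset.card_insert_of_notMem (by simp only [Finset.mem_Ico]; omega), Nat.card_Ico]

lemma owp_calc {n : ℕ} (E : ChordDiagram n)
    (hs : ∀ i, E.sign i = 1) (ho : ∀ i, E.OddChord i) (z : Fin n) (v w : ℤ)
    (hz : E.chordVal z = v) (hw : ∀ i, i ≠ z → E.chordVal i = w) :
    E.owp = T v + C ((n : ℤ) - 1) * T w := by
  unfold ChordDiagram.owp
  rw [Finset.filter_true_of_mem (fun i _ => ho i),
    ← Finset.add_sum_erase _ _ (Finset.mem_univ z), hz, hs z,
    Finset.sum_congr rfl (fun i hi => by rw [hw i (Finset.ne_of_mem_erase hi), hs i]),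
    Finset.sum_const, Finset.card_erase_of_mem (Finset.mem_univ z), Finset.card_univ,
    Fintype.card_fin]
  rw [map_one, one_mul, one_mul, nsmul_eq_mul, eq_intCast LaurentPolynomial.C]
  have : ((n - 1 : ℕ) : LaurentPolynomial ℤ) = ((n : ℤ) - 1 : ℤ) := by
    rcases n with _ | m
    · exact z.elim0
    · push_cast; ring
  rw [this]

end Stmt15Aux


/-- for `k ≥ 1`, the virtual knot `L_{2k}` (one positive chord
transversally intersected by `2k-1` parallel positive chords) has odd writhe
polynomial `t^{2k} + 2k - 1`, and its inverse has `t^{-2k+2} + (2k-1)t²`. -/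
theorem stmt_15 (k : ℕ) (hk : 1 ≤ k) (D : ChordDiagram (2 * k))
    (hep : ∀ p, D.ep p = Lpos k p) (hsign : ∀ i, D.sign i = 1) :
    D.owp = T ((2 * k : ℕ) : ℤ) + C ((2 * k : ℕ) - 1 : ℤ) ∧
    D.reverse.owp = T (-((2 * k : ℕ) : ℤ) + 2) + C ((2 * k : ℕ) - 1 : ℤ) * T 2 := by
  open Stmt15Aux in
  have hk2 : 0 < 2 * k := by omega
  set z : Fin (2 * k) := ⟨0, hk2⟩ with hzdef
  have hzval : z.val = 0 := rfl
  have hne : ∀ i : Fin (2 * k), i ≠ z → i.val ≠ 0 := by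
    intro i hi hv; exact hi (Fin.ext (by rw [hv, hzval]))
  -- forward diagram
  have hov : ∀ i : Fin (2 * k), (D.over' i).val = i.val := by
    intro i; simp [ChordDiagram.over', hep, Lpos]
  have hun : ∀ i : Fin (2 * k),
      (D.under i).val = if i.val = 0 then 2 * k else 4 * k - i.val := by
    intro i; by_cases h : i.val = 0 <;> simp [ChordDiagram.under, hep, Lpos, h]
  have hSB : ∀ (i : Fin (2 * k)) (x : Fin (2 * (2 * k))),
      D.StrictlyBetween i x ↔
        (i.val < x.val ∧ x.val < if i.val = 0 then 2 * k else 4 * k - i.val) := by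
    intro i x
    have hi := i.isLt; have hx := x.isLt
    simp only [ChordDiagram.StrictlyBetween, relpos_eq, hov, hun]
    split_ifs <;> omega
  have hIL : ∀ i j : Fin (2 * k), D.Interlinks i j ↔
      ((i.val = 0 ∧ j.val ≠ 0) ∨ (i.val ≠ 0 ∧ j.val = 0)) := by
    intro i j
    have hi := i.isLt; have hj := j.isLt
    simp only [ChordDiagram.Interlinks, Xor, hSB, hov, hun, Ne, Fin.ext_iff]
    split_ifs <;> omega
  have hodd : ∀ i, D.OddChord i := by
    intro i
    have hi := i.isLt
    simp only [ChordDiagram.OddChord, ChordDiagram.interlinkCount]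
    rw [card_filter_val (fun m => (i.val = 0 ∧ m ≠ 0) ∨ (i.val ≠ 0 ∧ m = 0)) (fun j => hIL i j)]
    by_cases h : i.val = 0
    · rw [card_filter_Ico (a := 1) (b := 2 * k)
        (fun m => (i.val = 0 ∧ m ≠ 0) ∨ (i.val ≠ 0 ∧ m = 0)) le_rfl (fun x hx => by beta_reduce; omega)]
      exact ⟨k - 1, by omega⟩
    · rw [card_filter_Ico (a := 0) (b := 1)
        (fun m => (i.val = 0 ∧ m ≠ 0) ∨ (i.val ≠ 0 ∧ m = 0)) (by omega) (fun x hx => by beta_reduce; omega)]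
      exact ⟨0, by omega⟩
  have hAL : ∀ a : Fin (2 * (2 * k)), D.arcLabel a =
      (((Finset.range (2 * k)).filter fun m =>
        if m = 0 then (a.val = 0 ∨ 2 * k < a.val)
        else (a.val ≤ m ∨ 4 * k - m < a.val)).card : ℤ) := by
    intro a
    have ha := a.isLt
    have key : ∀ i : Fin (2 * k),
        (ChordDiagram.relpos a (D.over' i) < ChordDiagram.relpos a (D.under i)) ↔
        (if i.val = 0 then (a.val = 0 ∨ 2 * k < a.val)
         else (a.val ≤ i.val ∨ 4 * k - i.val < a.val)) := by
      intro i; have hi := i.isLt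
      rw [relpos_eq, relpos_eq, hov, hun]
      split_ifs <;> omega
    simp only [ChordDiagram.arcLabel]
    rw [Finset.sum_congr rfl (fun i _ => hsign i), Finset.sum_const, nsmul_eq_mul, mul_one]
    exact_mod_cast card_filter_val _ key
  have hCV : ∀ i : Fin (2 * k),
      D.chordVal i = if i.val = 0 then ((2 * k : ℕ) : ℤ) else 0 := by
    intro i
    have hi := i.isLt
    have hio := hov i; have hiu := hun i
    simp only [ChordDiagram.chordVal]
    rw [if_pos (hsign i), hAL (D.over' i), hAL (D.under i)]
    by_cases h : i.val = 0
    · have e1 := card_filter_Ico (n := 2 * k) (a := 0) (b := 2 * k)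
        (fun m => if m = 0 then ((D.over' i).val = 0 ∨ 2 * k < (D.over' i).val)
          else ((D.over' i).val ≤ m ∨ 4 * k - m < (D.over' i).val))
        le_rfl (fun x hx => by beta_reduce; split_ifs at hiu ⊢ <;> omega)
      have e2 := card_filter_Ico (n := 2 * k) (a := 0) (b := 0)
        (fun m => if m = 0 then ((D.under i).val = 0 ∨ 2 * k < (D.under i).val)
          else ((D.under i).val ≤ m ∨ 4 * k - m < (D.under i).val))
        (by omega) (fun x hx => by beta_reduce; split_ifs at hiu ⊢ <;> omega)
      rw [if_pos h, e1, e2]; omega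
    · have e1 := card_filter_Ico (n := 2 * k) (a := i.val) (b := 2 * k)
        (fun m => if m = 0 then ((D.over' i).val = 0 ∨ 2 * k < (D.over' i).val)
          else ((D.over' i).val ≤ m ∨ 4 * k - m < (D.over' i).val))
        le_rfl (fun x hx => by beta_reduce; split_ifs at hiu ⊢ <;> omega)
      have e2 := card_filter_zero_or (n := 2 * k) (a := i.val + 1) (b := 2 * k)
        (fun m => if m = 0 then ((D.under i).val = 0 ∨ 2 * k < (D.under i).val)
          else ((D.under i).val ≤ m ∨ 4 * k - m < (D.under i).val))
        hk2 (by omega) le_rfl (fun x hx => by beta_reduce; split_ifs at hiu ⊢ <;> omega)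
      rw [if_neg h, e1, e2]; omega
  -- reverse diagram
  have hov' : ∀ i : Fin (2 * k), (D.reverse.over' i).val = 2 * (2 * k) - (i.val + 1) := by
    intro i
    simp [ChordDiagram.over', ChordDiagram.reverse, Equiv.trans_apply, hep, Lpos, Fin.val_rev]
  have hun' : ∀ i : Fin (2 * k),
      (D.reverse.under i).val = if i.val = 0 then 2 * k - 1 else i.val - 1 := by
    intro i
    have hi := i.isLt
    by_cases h : i.val = 0 <;>
      simp [ChordDiagram.under, ChordDiagram.reverse, Equiv.trans_apply, hep, Lpos,
        Fin.val_rev, h] <;> omega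
  have hsign' : ∀ i, D.reverse.sign i = 1 := hsign
  have hSB' : ∀ (i : Fin (2 * k)) (x : Fin (2 * (2 * k))),
      D.reverse.StrictlyBetween i x ↔
        (if i.val = 0 then x.val < 2 * k - 1
         else (x.val < i.val - 1 ∨ 4 * k - 1 - i.val < x.val)) := by
    intro i x
    have hi := i.isLt; have hx := x.isLt
    simp only [ChordDiagram.StrictlyBetween, relpos_eq, hov', hun']
    split_ifs <;> omega
  have hIL' : ∀ i j : Fin (2 * k), D.reverse.Interlinks i j ↔
      ((i.val = 0 ∧ j.val ≠ 0) ∨ (i.val ≠ 0 ∧ j.val = 0)) := by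
    intro i j
    have hi := i.isLt; have hj := j.isLt
    simp only [ChordDiagram.Interlinks, Xor, hSB', hov', hun', Ne, Fin.ext_iff]
    split_ifs <;> omega
  have hodd' : ∀ i, D.reverse.OddChord i := by
    intro i
    have hi := i.isLt
    simp only [ChordDiagram.OddChord, ChordDiagram.interlinkCount]
    rw [card_filter_val (fun m => (i.val = 0 ∧ m ≠ 0) ∨ (i.val ≠ 0 ∧ m = 0)) (fun j => hIL' i j)]
    by_cases h : i.val = 0
    · rw [card_filter_Ico (a := 1) (b := 2 * k)
        (fun m => (i.val = 0 ∧ m ≠ 0) ∨ (i.val ≠ 0 ∧ m = 0)) le_rfl (fun x hx => by beta_reduce; omega)]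
      exact ⟨k - 1, by omega⟩
    · rw [card_filter_Ico (a := 0) (b := 1)
        (fun m => (i.val = 0 ∧ m ≠ 0) ∨ (i.val ≠ 0 ∧ m = 0)) (by omega) (fun x hx => by beta_reduce; omega)]
      exact ⟨0, by omega⟩
  have hAL' : ∀ a : Fin (2 * (2 * k)), D.reverse.arcLabel a =
      (((Finset.range (2 * k)).filter fun m =>
        if m = 0 then 2 * k ≤ a.val
        else (m ≤ a.val ∧ a.val ≤ 4 * k - 1 - m)).card : ℤ) := by
    intro a
    have ha := a.isLt
    have key : ∀ i : Fin (2 * k),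
        (ChordDiagram.relpos a (D.reverse.over' i) < ChordDiagram.relpos a (D.reverse.under i)) ↔
        (if i.val = 0 then 2 * k ≤ a.val
         else (i.val ≤ a.val ∧ a.val ≤ 4 * k - 1 - i.val)) := by
      intro i; have hi := i.isLt
      rw [relpos_eq, relpos_eq, hov', hun']
      split_ifs <;> omega
    simp only [ChordDiagram.arcLabel]
    rw [Finset.sum_congr rfl (fun i _ => hsign' i), Finset.sum_const, nsmul_eq_mul, mul_one]
    exact_mod_cast card_filter_val _ key
  have hCV' : ∀ i : Fin (2 * k),
      D.reverse.chordVal i = if i.val = 0 then (-((2 * k : ℕ) : ℤ) + 2) else 2 := by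
    intro i
    have hi := i.isLt
    have hio := hov' i; have hiu := hun' i
    simp only [ChordDiagram.chordVal]
    rw [if_pos (hsign' i), hAL' (D.reverse.over' i), hAL' (D.reverse.under i)]
    by_cases h : i.val = 0
    · have e1 := card_filter_Ico (n := 2 * k) (a := 0) (b := 1)
        (fun m => if m = 0 then 2 * k ≤ (D.reverse.over' i).val
          else (m ≤ (D.reverse.over' i).val ∧ (D.reverse.over' i).val ≤ 4 * k - 1 - m))
        (by omega) (fun x hx => by beta_reduce; split_ifs at hiu ⊢ <;> omega)
      have e2 := card_filter_Ico (n := 2 * k) (a := 1) (b := 2 * k)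
        (fun m => if m = 0 then 2 * k ≤ (D.reverse.under i).val
          else (m ≤ (D.reverse.under i).val ∧ (D.reverse.under i).val ≤ 4 * k - 1 - m))
        le_rfl (fun x hx => by beta_reduce; split_ifs at hiu ⊢ <;> omega)
      rw [if_pos h, e1, e2]; omega
    · have e1 := card_filter_Ico (n := 2 * k) (a := 0) (b := i.val + 1)
        (fun m => if m = 0 then 2 * k ≤ (D.reverse.over' i).val
          else (m ≤ (D.reverse.over' i).val ∧ (D.reverse.over' i).val ≤ 4 * k - 1 - m))
        (by omega) (fun x hx => by beta_reduce; split_ifs at hiu ⊢ <;> omega)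
      have e2 := card_filter_Ico (n := 2 * k) (a := 1) (b := i.val)
        (fun m => if m = 0 then 2 * k ≤ (D.reverse.under i).val
          else (m ≤ (D.reverse.under i).val ∧ (D.reverse.under i).val ≤ 4 * k - 1 - m))
        (by omega) (fun x hx => by beta_reduce; split_ifs at hiu ⊢ <;> omega)
      rw [if_neg h, e1, e2]; omega
  constructor
  · have h1 := owp_calc D hsign hodd z ((2 * k : ℕ) : ℤ) 0
      (by rw [hCV z, if_pos hzval])
      (fun i hi => by rw [hCV i, if_neg (hne i hi)])
    rw [LaurentPolynomial.T_zero, mul_one] at h1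
    exact h1
  · exact owp_calc D.reverse hsign' hodd' z (-((2 * k : ℕ) : ℤ) + 2) 2
      (by rw [hCV' z, if_pos hzval])
      (fun i hi => by rw [hCV' i, if_neg (hne i hi)])
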